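/- arXiv:2408.01367 — 3 statements merged into one kernel-verified Lean document; each statement's English description precedes it below -/
import Mathlib

section
/- Let Ω ⊂ ℝ^d be compact, Ω̃ = Ω × [0,1], C > 0, σ ∈ (0,1), and let Λ : Lip_C^σ(Ω̃) × Ω̃ → ℝ^{d'} be a causal and identifiable space-time in-context map that is continuous for the weak* topology on Lip_C^σ(Ω̃). Then the reduced map (ν, x) ↦ Λ̄(ν, x) = Λ(ν, x, e(ν̄)) is continuous on the reduced space X_C^σ = {(μ_t, x) : μ ∈ Lip_C^σ(Ω̃), x ∈ Ω, t ∈ [0,1]} for the product of the weak* topology and the Euclidean topology. -/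
open MeasureTheory Set Filter
open scoped ENNReal RealInnerProductSpace BigOperators Topology

noncomputable section

/-- Euclidean space `ℝ^n`. -/
abbrev E (n : ℕ) : Type := EuclideanSpace ℝ (Fin n)

/-- Build a vector of `ℝ^n` from its coordinates. -/
def toE {n : ℕ} (f : Fin n → ℝ) : E n := (EuclideanSpace.equiv (Fin n) ℝ).symm f

/-- Parameters `θ = (Wʰ, Qʰ, Kʰ, Vʰ)ₕ` of a multi-head attention layer with token
dimension `m`, head dimension `dh`, key/query dimension `k` and `H` heads.
(Matrices are represented as linear maps.) -/
structure AttentionParams (m dh k H : ℕ) where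
  W : Fin H → (E dh →L[ℝ] E m)
  Q : Fin H → (E m →L[ℝ] E k)
  K : Fin H → (E m →L[ℝ] E k)
  V : Fin H → (E m →L[ℝ] E dh)

/-- The (unmasked) multi-head self-attention in-context map `Γ_θ(μ, x)`. -/
def attention {m dh k H : ℕ} (θ : AttentionParams m dh k H)
    (μ : Measure (E m)) (x : E m) : E m :=
  x + ∑ h : Fin H, θ.W h (∫ y,
      (Real.exp (⟪θ.Q h x, θ.K h y⟫ / Real.sqrt k) /
        ∫ z, Real.exp (⟪θ.Q h x, θ.K h z⟫ / Real.sqrt k) ∂μ) • θ.V h y ∂μ)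

/-- In-context maps `(μ, x) ↦ G(μ, x)`. -/
abbrev ICMap (m m' : ℕ) : Type := Measure (E m) → E m → E m'

/-- In-context composition `(G₂ ⋄ G₁)(μ, x) = G₂(G₁(μ, ·)♯μ, G₁(μ, x))`. -/
def ictxComp {m m' m'' : ℕ} (G₂ : ICMap m' m'') (G₁ : ICMap m m') : ICMap m m'' :=
  fun μ x => G₂ (μ.map (G₁ μ)) (G₁ μ x)

/-- A context-free (tokenwise) layer, viewed as an in-context map. -/
def ctxFree {m m' : ℕ} (F : E m → E m') : ICMap m m' := fun _ x => F x

/-- `IsAttnChain dmax Hmax G` holds iff `G = F_{ξ_L} ⋄ Γ_{θ_L} ⋄ ⋯ ⋄ F_{ξ_1} ⋄ Γ_{θ_1}`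
for some `L ≥ 1`, where each `Γ_{θ_ℓ}` is a multi-head self-attention with token
dimension `≤ dmax`, head and key dimensions `1`, and at most `Hmax` heads, and each
`F_{ξ_ℓ}` is a context-free tokenwise layer. -/
inductive IsAttnChain (dmax Hmax : ℕ) : {m m' : ℕ} → ICMap m m' → Prop
  | base {m m' H : ℕ} (hm : m ≤ dmax) (hH : H ≤ Hmax)
      (θ : AttentionParams m 1 1 H) (F : E m → E m') :
      IsAttnChain dmax Hmax (ictxComp (ctxFree F) (attention θ))
  | step {m m' m'' H : ℕ} {T : ICMap m m'} (hT : IsAttnChain dmax Hmax T)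
      (hm : m' ≤ dmax) (hH : H ≤ Hmax)
      (θ : AttentionParams m' 1 1 H) (F : E m' → E m'') :
      IsAttnChain dmax Hmax (ictxComp (ctxFree F) (ictxComp (attention θ) T))

/-- The elementary in-context map `γ_λ`, `λ = (a, b, c, v)`. -/
def elemGamma {d : ℕ} (a : E d) (b c v : ℝ) (μ : Measure (E d)) (x : E d) : ℝ :=
  ⟪x, a⟫ + b + ∫ y,
      (Real.exp (c * (⟪x, a⟫ + b) * (⟪y, a⟫ + b)) * (v * (⟪a, y⟫ + b)) /
        ∫ z, Real.exp (c * (⟪x, a⟫ + b) * (⟪z, a⟫ + b)) ∂μ) ∂μ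

/-- Component-wise (Hadamard) product `v₁ ⊙ ⋯ ⊙ v_T` of vectors in `ℝ^n`. -/
def hprod {n T : ℕ} (f : Fin T → E n) : E n := toE fun i => ∏ t, f t i

/-- Nested application `Φ(v_T, Φ(v_{T-1}, ⋯ Φ(v_1, 𝟏) ⋯ ))`. -/
def nestPhi {n : ℕ} (Φ : E n × E n → E n) : (T : ℕ) → (Fin T → E n) → E n
  | 0, _ => toE fun _ => 1
  | T + 1, v => Φ (v (Fin.last T), nestPhi Φ T fun t => v t.castSucc)

/-- Composition of a list of in-context maps; the head of the list acts first. -/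
def compList {m : ℕ} : List (ICMap m m) → ICMap m m
  | [] => fun _ x => x
  | l :: ls => ictxComp (compList ls) l

/-! ### Masked (space-time) framework -/

/-- Time marginal `μ̄ = P♯μ`, `P(x, t) = t`. -/
def timeMarg {m : ℕ} (μ : Measure (E m × ℝ)) : Measure ℝ := μ.map Prod.snd

/-- Squared 2-Wasserstein distance `W₂(α, β)²`, as an infimum over couplings. -/
def W2sq {m : ℕ} (α β : Measure (E m)) : ℝ≥0∞ :=
  sInf {c | ∃ π : Measure (E m × E m), π.map Prod.fst = α ∧ π.map Prod.snd = β ∧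
      c = ∫⁻ p, edist p.1 p.2 ^ 2 ∂π}

/-- `μ ∈ Lip_C^σ(Ω̃)`: a probability measure on `Ω̃ = Ω × [0,1]` admitting a
disintegration `μ(dx, ds) = μ(dx|s) μ̄(ds)` whose conditional `s ↦ μ(·|s)` is
`C`-Lipschitz for `W₂`, and with `μ̄({0}) ≥ σ`. -/
def IsLipCtx {m : ℕ} (Ω : Set (E m)) (C σ : ℝ) (μ : Measure (E m × ℝ)) : Prop :=
  IsProbabilityMeasure μ ∧ μ ((Ω ×ˢ Icc (0:ℝ) 1)ᶜ) = 0 ∧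
    ENNReal.ofReal σ ≤ timeMarg μ {0} ∧
    ∃ κ : ℝ → Measure (E m), Measurable κ ∧ (∀ s, IsProbabilityMeasure (κ s)) ∧
      (∀ s, κ s Ωᶜ = 0) ∧
      μ = (timeMarg μ).bind (fun s => (κ s).map fun x => (x, s)) ∧
      ∀ s ∈ Icc (0:ℝ) 1, ∀ t ∈ Icc (0:ℝ) 1,
        W2sq (κ s) (κ t) ≤ ENNReal.ofReal (C * |s - t|) ^ 2

/-- The masked measure `μ_t = (1_{[0,t]} / μ̄([0,t])) · μ` (restriction of the time
variable to `[0, t]`, renormalized). -/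
def maskedM {m : ℕ} (μ : Measure (E m × ℝ)) (t : ℝ) : Measure (E m × ℝ) :=
  (μ (univ ×ˢ Icc 0 t))⁻¹ • μ.restrict (univ ×ˢ Icc 0 t)

/-- The masked measure, as a probability measure (junk value `μ` itself when
`μ̄([0,t]) = 0`; for `μ ∈ Lip_C^σ` and `t ∈ [0,1]` one has `μ̄([0,t]) ≥ σ > 0`). -/
def maskedP {m : ℕ} (μ : ProbabilityMeasure (E m × ℝ)) (t : ℝ) :
    ProbabilityMeasure (E m × ℝ) :=
  if h : μ.toMeasure (univ ×ˢ Icc 0 t) = 0 then μ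
  else ⟨maskedM μ.toMeasure t, ⟨by
    simp only [maskedM, Measure.smul_apply, Measure.restrict_apply_univ, smul_eq_mul]
    exact ENNReal.inv_mul_cancel h (measure_ne_top _ _)⟩⟩

/-- Space-time in-context maps `(μ, (x, t)) ↦ Λ(μ, x, t)`. -/
abbrev STMap (m m' : ℕ) : Type := Measure (E m × ℝ) → E m × ℝ → E m'

/-- Masked in-context composition
`(Γ₂ ⋄ Γ₁)(μ, x, t) = Γ₂((Γ₁(μ), Id)♯μ, Γ₁(μ, x, t), t)`. -/
def stComp {m m' m'' : ℕ} (Γ₂ : STMap m' m'') (Γ₁ : STMap m m') : STMap m m'' :=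
  fun μ p => Γ₂ (μ.map fun q => (Γ₁ μ q, q.2)) (Γ₁ μ p, p.2)

/-- A context-free layer acting tokenwise in space, as a space-time map. -/
def stCtxFree {m m' : ℕ} (F : E m → E m') : STMap m m' := fun _ p => F p.1

/-- The masked multi-head self-attention in-context map `Γ_θ(μ, x, t)`. -/
def maskedAttention {m dh k H : ℕ} (θ : AttentionParams m dh k H)
    (μ : Measure (E m × ℝ)) (p : E m × ℝ) : E m :=
  p.1 + ∑ h : Fin H, θ.W h (∫ y,
      ((Real.exp (⟪θ.Q h p.1, θ.K h y.1⟫ / Real.sqrt k) *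
          (Icc (0:ℝ) p.2).indicator 1 y.2) /
        ∫ z, Real.exp (⟪θ.Q h p.1, θ.K h z.1⟫ / Real.sqrt k) *
          (Icc (0:ℝ) p.2).indicator 1 z.2 ∂μ) • θ.V h y.1 ∂μ)

/-- The unmasked attention formula on space-time measures (no time masking). -/
def attentionST {m dh k H : ℕ} (θ : AttentionParams m dh k H)
    (μ : Measure (E m × ℝ)) (x : E m) : E m :=
  x + ∑ h : Fin H, θ.W h (∫ y,
      (Real.exp (⟪θ.Q h x, θ.K h y.1⟫ / Real.sqrt k) /
        ∫ z, Real.exp (⟪θ.Q h x, θ.K h z.1⟫ / Real.sqrt k) ∂μ) • θ.V h y.1 ∂μ)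

/-- Causality of a space-time in-context map: `Λ(μ, x, t) = Λ(μ_t, x, t)`. -/
def IsCausalM {m d' : ℕ} (Ω : Set (E m)) (C σ : ℝ) (Λ : STMap m d') : Prop :=
  ∀ μ, IsLipCtx Ω C σ μ → ∀ x ∈ Ω, ∀ t ∈ Icc (0:ℝ) 1,
    Λ μ (x, t) = Λ (maskedM μ t) (x, t)

/-- Identifiability: `μ_t = μ_{t'}` implies `Λ(μ_t, ·, t) = Λ(μ_{t'}, ·, t')`. -/
def IsIdentifiableM {m d' : ℕ} (Ω : Set (E m)) (C σ : ℝ) (Λ : STMap m d') : Prop :=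
  ∀ μ, IsLipCtx Ω C σ μ → ∀ t ∈ Icc (0:ℝ) 1, ∀ t' ∈ Icc (0:ℝ) 1,
    maskedM μ t = maskedM μ t' →
    ∀ x ∈ Ω, Λ (maskedM μ t) (x, t) = Λ (maskedM μ t') (x, t')

/-- Space-time in-context maps taking a probability measure (carrying the weak*
topology) as context. -/
abbrev PSTMap (m d' : ℕ) : Type := ProbabilityMeasure (E m × ℝ) → E m × ℝ → E d'

/-- Causality, probability-measure version. -/
def IsCausalP {m d' : ℕ} (Ω : Set (E m)) (C σ : ℝ) (Λ : PSTMap m d') : Prop :=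
  ∀ μ : ProbabilityMeasure (E m × ℝ), IsLipCtx Ω C σ μ.toMeasure →
    ∀ x ∈ Ω, ∀ t ∈ Icc (0:ℝ) 1, Λ μ (x, t) = Λ (maskedP μ t) (x, t)

/-- Identifiability, probability-measure version. -/
def IsIdentifiableP {m d' : ℕ} (Ω : Set (E m)) (C σ : ℝ) (Λ : PSTMap m d') : Prop :=
  ∀ μ : ProbabilityMeasure (E m × ℝ), IsLipCtx Ω C σ μ.toMeasure →
    ∀ t ∈ Icc (0:ℝ) 1, ∀ t' ∈ Icc (0:ℝ) 1,
      maskedP μ t = maskedP μ t' →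
      ∀ x ∈ Ω, Λ (maskedP μ t) (x, t) = Λ (maskedP μ t') (x, t')

/-- `e(μ̄) = max supp(μ̄)`: the endpoint of the support of the time marginal. -/
def timeEnd {m : ℕ} (μ : Measure (E m × ℝ)) : ℝ :=
  sSup {r : ℝ | ∀ ε > 0, timeMarg μ (Ioo (r - ε) (r + ε)) ≠ 0}

/-- The reduced space `X_C^σ = {(μ_t, x) : μ ∈ Lip_C^σ(Ω̃), x ∈ Ω, t ∈ [0,1]}`. -/
def XCset {d : ℕ} (Ω : Set (E d)) (C σ : ℝ) :
    Set (ProbabilityMeasure (E d × ℝ) × E d) :=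
  {p | ∃ μ : ProbabilityMeasure (E d × ℝ), IsLipCtx Ω C σ μ.toMeasure ∧
      ∃ t ∈ Icc (0:ℝ) 1, ∃ x ∈ Ω, p = (maskedP μ t, x)}

/-- Deep masked transformers `F_{ξ_L} ⋄ Γ_{θ_L} ⋄ ⋯ ⋄ F_{ξ_1} ⋄ Γ_{θ_1}` with masked
attentions of token dimension `≤ dmax`, head and key dimensions `1`, and `≤ Hmax`
heads. -/
inductive IsMaskedChain (dmax Hmax : ℕ) : {m m' : ℕ} → STMap m m' → Prop
  | base {m m' H : ℕ} (hm : m ≤ dmax) (hH : H ≤ Hmax)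
      (θ : AttentionParams m 1 1 H) (F : E m → E m') :
      IsMaskedChain dmax Hmax (stComp (stCtxFree F) (maskedAttention θ))
  | step {m m' m'' H : ℕ} {T : STMap m m'} (hT : IsMaskedChain dmax Hmax T)
      (hm : m' ≤ dmax) (hH : H ≤ Hmax)
      (θ : AttentionParams m' 1 1 H) (F : E m' → E m'') :
      IsMaskedChain dmax Hmax (stComp (stCtxFree F) (stComp (maskedAttention θ) T))

/-- Reduced in-context maps `(ν, x) ↦ Λ̄(ν, x)`. -/
abbrev RMap (m m' : ℕ) : Type := Measure (E m × ℝ) → E m → E m'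

/-- Composition of reduced maps; the push-forward keeps the time fixed. -/
def rComp {m m' m'' : ℕ} (R₂ : RMap m' m'') (R₁ : RMap m m') : RMap m m'' :=
  fun ν x => R₂ (ν.map fun q => (R₁ ν q.1, q.2)) (R₁ ν x)

/-- Context-free tokenwise layer as a reduced map. -/
def rCtxFree {m m' : ℕ} (F : E m → E m') : RMap m m' := fun _ x => F x

/-- Reduced map `Γ̄_θ(ν, x) = Γ_θ(ν, x, e(ν̄))` of the masked attention. -/
def reducedAttention {m dh k H : ℕ} (θ : AttentionParams m dh k H) : RMap m m :=
  fun ν x => maskedAttention θ ν (x, timeEnd ν)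

/-- Deep transformers built from reduced masked attentions and context-free layers. -/
inductive IsReducedChain (dmax Hmax : ℕ) : {m m' : ℕ} → RMap m m' → Prop
  | base {m m' H : ℕ} (hm : m ≤ dmax) (hH : H ≤ Hmax)
      (θ : AttentionParams m 1 1 H) (F : E m → E m') :
      IsReducedChain dmax Hmax (rComp (rCtxFree F) (reducedAttention θ))
  | step {m m' m'' H : ℕ} {T : RMap m m'} (hT : IsReducedChain dmax Hmax T)
      (hm : m' ≤ dmax) (hH : H ≤ Hmax)
      (θ : AttentionParams m' 1 1 H) (F : E m' → E m'') :
      IsReducedChain dmax Hmax (rComp (rCtxFree F) (rComp (reducedAttention θ) T))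

end

section AuxProofs

open ProbabilityTheory

variable {d : ℕ}

lemma univ_prod_Icc_eq (t : ℝ) :
    (univ ×ˢ Icc (0:ℝ) t : Set (E d × ℝ)) = Prod.snd ⁻¹' Icc (0:ℝ) t := by
  ext ⟨x, s⟩; simp

lemma measurable_kernelMap {κ : ℝ → Measure (E d)} (hκ : Measurable κ)
    (hκp : ∀ s, IsProbabilityMeasure (κ s)) :
    Measurable fun s : ℝ => (κ s).map fun x => (x, s) := by
  rw [Measure.measurable_measure]
  intro A hA
  have h1 : ∀ s : ℝ, ((κ s).map fun x => (x, s)) A = κ s (Prod.mk s ⁻¹' (Prod.swap ⁻¹' A)) := by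
    intro s
    rw [Measure.map_apply measurable_prodMk_right hA]
    congr 1
  simp_rw [h1]
  let η : Kernel ℝ (E d) := ⟨κ, hκ⟩
  haveI : IsMarkovKernel η := ⟨hκp⟩
  exact Kernel.measurable_kernel_prodMk_left (κ := η) (hA.preimage measurable_swap)

lemma bind_smul_meas {α β : Type*} [MeasurableSpace α] [MeasurableSpace β]
    (m : Measure α) (c : ℝ≥0∞) {f : α → Measure β} (hf : Measurable f) :
    (c • m).bind f = c • m.bind f := by
  ext A hA
  rw [Measure.smul_apply, Measure.bind_apply hA hf.aemeasurable,
    Measure.bind_apply hA hf.aemeasurable, lintegral_smul_measure, smul_eq_mul]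

lemma restrict_bind_kernel {κ : ℝ → Measure (E d)} (hκ : Measurable κ)
    (hκp : ∀ s, IsProbabilityMeasure (κ s)) (m : Measure ℝ) (t : ℝ) :
    ((m.bind fun s => (κ s).map fun x => (x, s)).restrict (univ ×ˢ Icc (0:ℝ) t))
      = (m.restrict (Icc 0 t)).bind fun s => (κ s).map fun x => (x, s) := by
  have hf := measurable_kernelMap hκ hκp
  have hS : MeasurableSet (univ ×ˢ Icc (0:ℝ) t : Set (E d × ℝ)) :=
    MeasurableSet.univ.prod measurableSet_Icc
  ext A hA
  rw [Measure.restrict_apply hA, Measure.bind_apply (hA.inter hS) hf.aemeasurable,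
    Measure.bind_apply hA hf.aemeasurable, ← lintegral_indicator measurableSet_Icc]
  congr 1
  ext s
  rw [Measure.map_apply measurable_prodMk_right (hA.inter hS)]
  by_cases hs : s ∈ Icc (0:ℝ) t
  · rw [indicator_of_mem hs, Measure.map_apply measurable_prodMk_right hA]
    congr 1
    ext x
    simp only [mem_preimage, mem_inter_iff, mem_prod, mem_univ, true_and]
    exact and_iff_left hs
  · rw [indicator_of_notMem hs]
    have : ((fun x : E d => (x, s)) ⁻¹' (A ∩ univ ×ˢ Icc (0:ℝ) t)) = ∅ := by
      ext x
      simp only [mem_preimage, mem_inter_iff, mem_prod, mem_univ, true_and, mem_empty_iff_false,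
        iff_false, not_and]
      exact fun _ => hs
    rw [this, measure_empty]

lemma isLipCtx_maskedM {Ω : Set (E d)} {C σ : ℝ} (hσ : 0 < σ)
    {μ : Measure (E d × ℝ)} (hμ : IsLipCtx Ω C σ μ) {t : ℝ} (ht : t ∈ Icc (0:ℝ) 1) :
    IsLipCtx Ω C σ (maskedM μ t) ∧ μ (univ ×ˢ Icc (0:ℝ) t) ≠ 0 := by
  obtain ⟨hprob, hsupp, hσm, κ, hκm, hκp, hκΩ, hdis, hlip⟩ := hμ
  have hS : MeasurableSet (univ ×ˢ Icc (0:ℝ) t : Set (E d × ℝ)) :=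
    MeasurableSet.univ.prod measurableSet_Icc
  have h0mem : (0:ℝ) ∈ Icc (0:ℝ) t := ⟨le_refl 0, ht.1⟩
  have h0S : (Prod.snd ⁻¹' ({0} : Set ℝ) : Set (E d × ℝ)) ⊆ univ ×ˢ Icc (0:ℝ) t := by
    rw [univ_prod_Icc_eq]
    intro p hp
    simp only [mem_preimage, mem_singleton_iff] at hp
    simpa [hp] using h0mem
  have hσS : ENNReal.ofReal σ ≤ μ (univ ×ˢ Icc (0:ℝ) t) := by
    refine hσm.trans ?_
    rw [timeMarg, Measure.map_apply measurable_snd (measurableSet_singleton 0)]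
    exact measure_mono h0S
  have hc0 : μ (univ ×ˢ Icc (0:ℝ) t) ≠ 0 := by
    intro h
    rw [h, le_zero_iff] at hσS
    exact (ENNReal.ofReal_pos.2 hσ).ne' hσS
  have hc1 : μ (univ ×ˢ Icc (0:ℝ) t) ≤ 1 := prob_le_one
  have hcT : μ (univ ×ˢ Icc (0:ℝ) t) ≠ ⊤ := measure_ne_top _ _
  set c : ℝ≥0∞ := μ (univ ×ˢ Icc (0:ℝ) t) with hc
  have hmask : maskedM μ t = c⁻¹ • μ.restrict (univ ×ˢ Icc (0:ℝ) t) := rfl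
  have hTM : timeMarg (maskedM μ t) = c⁻¹ • (timeMarg μ).restrict (Icc 0 t) := by
    rw [timeMarg, hmask, Measure.map_smul, univ_prod_Icc_eq,
      ← Measure.restrict_map measurable_snd measurableSet_Icc, timeMarg]
  refine ⟨⟨?_, ?_, ?_, κ, hκm, hκp, hκΩ, ?_, hlip⟩, hc0⟩
  · constructor
    rw [hmask, Measure.smul_apply, Measure.restrict_apply_univ, smul_eq_mul]
    exact ENNReal.inv_mul_cancel hc0 hcT
  · rw [hmask, Measure.smul_apply, Measure.restrict_apply' hS, smul_eq_mul]
    have : μ ((Ω ×ˢ Icc (0:ℝ) 1)ᶜ ∩ univ ×ˢ Icc (0:ℝ) t) = 0 :=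
      measure_mono_null inter_subset_left hsupp
    rw [this, mul_zero]
  · rw [hTM, Measure.smul_apply, Measure.restrict_apply' measurableSet_Icc, smul_eq_mul]
    have h1 : ({0} : Set ℝ) ∩ Icc (0:ℝ) t = {0} := by
      rw [inter_eq_left]
      simpa using h0mem
    rw [h1]
    calc ENNReal.ofReal σ ≤ timeMarg μ {0} := hσm
      _ = 1 * timeMarg μ {0} := (one_mul _).symm
      _ ≤ c⁻¹ * timeMarg μ {0} := mul_le_mul_left (ENNReal.one_le_inv.2 hc1) _
  · calc maskedM μ t = c⁻¹ • μ.restrict (univ ×ˢ Icc (0:ℝ) t) := rfl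
      _ = c⁻¹ • (((timeMarg μ).bind fun s => (κ s).map fun x => (x, s)).restrict
            (univ ×ˢ Icc (0:ℝ) t)) := by rw [← hdis]
      _ = c⁻¹ • (((timeMarg μ).restrict (Icc 0 t)).bind fun s => (κ s).map fun x => (x, s)) := by
          rw [restrict_bind_kernel hκm hκp]
      _ = (c⁻¹ • (timeMarg μ).restrict (Icc 0 t)).bind fun s => (κ s).map fun x => (x, s) :=
          (bind_smul_meas _ _ (measurable_kernelMap hκm hκp)).symm
      _ = (timeMarg (maskedM μ t)).bind fun s => (κ s).map fun x => (x, s) := by rw [hTM]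

lemma maskedP_eq_self {ν : ProbabilityMeasure (E d × ℝ)} {s : ℝ}
    (h : ν.toMeasure ((univ ×ˢ Icc (0:ℝ) s)ᶜ) = 0) : maskedP ν s = ν := by
  haveI : IsProbabilityMeasure ν.toMeasure := ν.2
  have hS : MeasurableSet (univ ×ˢ Icc (0:ℝ) s : Set (E d × ℝ)) :=
    MeasurableSet.univ.prod measurableSet_Icc
  have hfull : ν.toMeasure (univ ×ˢ Icc (0:ℝ) s) = 1 := (prob_compl_eq_zero_iff hS).1 h
  have hne : ν.toMeasure (univ ×ˢ Icc (0:ℝ) s) ≠ 0 := by rw [hfull]; exact one_ne_zero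
  apply Subtype.ext
  rw [show maskedP ν s = _ from dif_neg hne]
  show maskedM ν.toMeasure s = ν.toMeasure
  rw [maskedM, hfull, inv_one, one_smul]
  refine Measure.restrict_eq_self_of_ae_mem ?_
  rw [ae_iff]
  have heq : {a : E d × ℝ | ¬ a ∈ univ ×ˢ Icc (0:ℝ) s} = (univ ×ˢ Icc (0:ℝ) s)ᶜ := rfl
  rw [heq]
  exact h

lemma timeEnd_spec {ν : Measure (E d × ℝ)}
    (hsupp1 : timeMarg ν ((Icc (0:ℝ) 1)ᶜ) = 0) (h0 : timeMarg ν {0} ≠ 0) :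
    timeEnd ν ∈ Icc (0:ℝ) 1 ∧ ν ((univ ×ˢ Icc (0:ℝ) (timeEnd ν))ᶜ) = 0 := by
  set m := timeMarg ν with hm
  set T := {r : ℝ | ∀ ε > 0, m (Ioo (r - ε) (r + ε)) ≠ 0} with hT
  have h0T : (0:ℝ) ∈ T := by
    intro ε hε h
    have hsub : ({0} : Set ℝ) ⊆ Ioo (0 - ε) (0 + ε) := by
      intro x hx
      simp only [mem_singleton_iff] at hx
      subst hx
      constructor <;> simp [hε]
    exact h0 (measure_mono_null hsub h)
  have hT1 : ∀ r ∈ T, r ≤ 1 := by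
    intro r hr
    by_contra hlt
    push_neg at hlt
    have hε : (0:ℝ) < r - 1 := by linarith
    refine hr (r - 1) hε (measure_mono_null ?_ hsupp1)
    intro x hx
    simp only [mem_compl_iff, mem_Icc, not_and, not_le]
    intro _
    have : r - (r - 1) < x := hx.1
    linarith
  have hbdd : BddAbove T := ⟨1, hT1⟩
  have hte : timeEnd ν = sSup T := rfl
  have he0 : 0 ≤ timeEnd ν := by rw [hte]; exact le_csSup hbdd h0T
  have he1 : timeEnd ν ≤ 1 := by rw [hte]; exact csSup_le ⟨0, h0T⟩ hT1
  have htail : m (Ioi (timeEnd ν)) = 0 := by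
    refine measure_null_of_locally_null _ (fun x hx => ?_)
    have hxT : x ∉ T := by
      intro hxT
      exact absurd (le_csSup hbdd hxT) (not_le.2 hx)
    rw [hT, mem_setOf_eq] at hxT
    push_neg at hxT
    obtain ⟨ε, hε, hmx⟩ := hxT
    exact ⟨Ioo (x - ε) (x + ε), nhdsWithin_le_nhds
      (Ioo_mem_nhds (by linarith) (by linarith)), hmx⟩
  refine ⟨⟨he0, he1⟩, ?_⟩
  have hcompl : ((univ ×ˢ Icc (0:ℝ) (timeEnd ν))ᶜ : Set (E d × ℝ))
      = Prod.snd ⁻¹' ((Icc (0:ℝ) (timeEnd ν))ᶜ) := by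
    rw [univ_prod_Icc_eq, preimage_compl]
  rw [hcompl, ← Measure.map_apply measurable_snd measurableSet_Icc.compl]
  have hmm' : Measure.map Prod.snd ν = m := rfl
  rw [hmm']
  have hsplit : ((Icc (0:ℝ) (timeEnd ν))ᶜ : Set ℝ) = Iio 0 ∪ Ioi (timeEnd ν) := by
    ext x
    simp only [mem_compl_iff, mem_Icc, mem_union, mem_Iio, mem_Ioi, not_and_or, not_le]
  rw [hsplit]
  refine measure_union_null ?_ htail
  refine measure_mono_null ?_ hsupp1
  intro x hx
  simp only [mem_Iio] at hx
  simp only [mem_compl_iff, mem_Icc, not_and, not_le]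
  intro h
  linarith

end AuxProofs

/-- **Continuity of the reduced map (Lemma 6 (ii)).** If a causal identifiable space-time
in-context map `Λ` is continuous for the weak* topology on `Lip_C^σ(Ω̃)`, then its
reduced map `(ν, x) ↦ Λ̄(ν, x) = Λ(ν, x, e(ν̄))` is continuous on the reduced space
`X_C^σ = {(μ_t, x) : μ ∈ Lip_C^σ(Ω̃), x ∈ Ω, t ∈ [0,1]}` for the product of the weak*
topology and the Euclidean topology. -/
theorem reduced_continuous {d d' : ℕ} (Ω : Set (E d)) (hΩ : IsCompact Ω)
    {C σ : ℝ} (hC : 0 < C) (hσ : σ ∈ Ioo (0:ℝ) 1)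
    (Λ : PSTMap d d')
    (hcont : ContinuousOn (fun p : ProbabilityMeasure (E d × ℝ) × (E d × ℝ) => Λ p.1 p.2)
      ({μ : ProbabilityMeasure (E d × ℝ) | IsLipCtx Ω C σ μ.toMeasure} ×ˢ
        (Ω ×ˢ Icc (0:ℝ) 1)))
    (hcausal : IsCausalP Ω C σ Λ) (hident : IsIdentifiableP Ω C σ Λ) :
    ContinuousOn (fun p : ProbabilityMeasure (E d × ℝ) × E d =>
      Λ p.1 (p.2, timeEnd p.1.toMeasure)) (XCset Ω C σ) := by
  have key : ∀ p ∈ XCset Ω C σ,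
      IsLipCtx Ω C σ p.1.toMeasure ∧ p.2 ∈ Ω ∧
        Λ p.1 (p.2, timeEnd p.1.toMeasure) = Λ p.1 (p.2, 1) := by
    rintro p ⟨μ, hμ, t, ht, x, hx, rfl⟩
    have hmm := isLipCtx_maskedM hσ.1 hμ ht
    have htoM : (maskedP μ t).toMeasure = maskedM μ.toMeasure t := by
      rw [show maskedP μ t = _ from dif_neg hmm.2]
      rfl
    set ν := maskedP μ t with hν
    have hLip : IsLipCtx Ω C σ ν.toMeasure := htoM ▸ hmm.1
    have hsupp : ν.toMeasure ((Ω ×ˢ Icc (0:ℝ) 1)ᶜ) = 0 := hLip.2.1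
    have hsupp1 : timeMarg ν.toMeasure ((Icc (0:ℝ) 1)ᶜ) = 0 := by
      rw [timeMarg, Measure.map_apply measurable_snd measurableSet_Icc.compl]
      refine measure_mono_null ?_ hsupp
      intro q hq
      simp only [mem_preimage, mem_compl_iff, mem_Icc] at hq ⊢
      rw [mem_prod]
      exact fun hq2 => hq hq2.2
    have h0 : timeMarg ν.toMeasure {0} ≠ 0 := by
      intro h
      have := hLip.2.2.1
      rw [h, le_zero_iff] at this
      exact (ENNReal.ofReal_pos.2 hσ.1).ne' this
    obtain ⟨heIcc, htail⟩ := timeEnd_spec hsupp1 h0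
    have h1tail : ν.toMeasure ((univ ×ˢ Icc (0:ℝ) 1)ᶜ) = 0 := by
      refine measure_mono_null (compl_subset_compl.2 ?_) hsupp
      exact prod_mono_left (subset_univ Ω)
    have hm1 : maskedP ν 1 = ν := maskedP_eq_self h1tail
    have hme : maskedP ν (timeEnd ν.toMeasure) = ν := maskedP_eq_self htail
    have hid := hident ν hLip (timeEnd ν.toMeasure) heIcc 1
      (right_mem_Icc.2 zero_le_one) (by rw [hm1, hme]) x hx
    rw [hm1, hme] at hid
    exact ⟨hLip, hx, hid⟩
  refine ContinuousOn.congr (f := fun p : ProbabilityMeasure (E d × ℝ) × E d =>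
    Λ p.1 (p.2, (1:ℝ))) ?_ (fun p hp => (key p hp).2.2)
  have hemb : Continuous (fun p : ProbabilityMeasure (E d × ℝ) × E d =>
      (p.1, (p.2, (1:ℝ)))) :=
    continuous_fst.prodMk (continuous_snd.prodMk continuous_const)
  refine ContinuousOn.comp hcont hemb.continuousOn (fun p hp => ?_)
  exact ⟨(key p hp).1, (key p hp).2.1, right_mem_Icc.2 zero_le_one⟩
end

section
/- Let Ω ⊂ ℝ^d be compact, Ω̃ = Ω × [0,1], C > 0, σ ∈ (0,1), and let Γ_θ be a masked multi-head self-attention in-context map. Then (b) for every (μ, x, t) ∈ Lip_C^σ(Ω̃) × Ω̃, Γ_θ(μ, x, t) = Γ̄_θ(μ_t, x), where Γ̄_θ(ν, x) = Γ_θ(ν, x, e(ν̄)) is the reduced map and e(ν̄) = max supp(ν̄); and (c) the reduced map (ν, x) ↦ Γ̄_θ(ν, x) is continuous on X_C^σ = {(μ_t, x) : μ ∈ Lip_C^σ(Ω̃), x ∈ Ω, t ∈ [0,1]} for the product of the weak* topology and the Euclidean topology; moreover Γ̄_θ(μ_t, x) equals the unmasked attention formula evaluated at μ_t: x + Σ_h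 W^h ∫ [exp(⟨Q^h x, K^h y⟩/√k) / ∫ exp(⟨Q^h x, K^h z⟩/√k) dμ_t(z, s)] V^h y dμ_t(y, r). -/
open MeasureTheory Set Filter
open scoped ENNReal RealInnerProductSpace BigOperators Topology

section Aux

open MeasureTheory Set Filter Metric
open scoped ENNReal RealInnerProductSpace BigOperators Topology BoundedContinuousFunction

noncomputable section

lemma toE_apply {n : ℕ} (f : Fin n → ℝ) (i : Fin n) : toE f i = f i := rfl

lemma integrable_of_vanish {d : ℕ} {β : Type*} [NormedAddCommGroup β]
    {F : E d × ℝ → β} (hF : Continuous F) {K₁ : Set (E d × ℝ)} (hK₁ : IsCompact K₁)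
    (h0 : ∀ y ∉ K₁, F y = 0) (ν : Measure (E d × ℝ)) [IsFiniteMeasure ν] :
    Integrable F ν := by
  obtain ⟨M, hM⟩ := hK₁.exists_bound_of_continuousOn hF.continuousOn
  refine Integrable.mono' (integrable_const (max M 0)) hF.aestronglyMeasurable
    (ae_of_all _ fun y => ?_)
  by_cases hy : y ∈ K₁
  · exact le_max_of_le_left (hM y hy)
  · simp [h0 y hy]

lemma integral_eq_toE {n : ℕ} {α : Type*} [MeasurableSpace α] (ν : Measure α)
    (F : α → E n) (hF : Integrable F ν) :
    ∫ y, F y ∂ν = toE (fun i => ∫ y, F y i ∂ν) := by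
  refine (EuclideanSpace.equiv (Fin n) ℝ).injective ?_
  funext i
  have h := (EuclideanSpace.proj (𝕜 := ℝ) (i := i)).integral_comp_comm hF
  simp only [PiLp.proj_apply] at h
  simpa [toE] using h.symm

end

end Aux
section Aux2

open MeasureTheory Set Filter Metric
open scoped ENNReal RealInnerProductSpace BigOperators Topology BoundedContinuousFunction

noncomputable section

lemma integrable_param {d m : ℕ} {f : E m × (E d × ℝ) → ℝ} (hf : Continuous f)
    {K₁ : Set (E d × ℝ)} (hK₁ : IsCompact K₁)
    (h0 : ∀ x y, y ∉ K₁ → f (x, y) = 0) (x : E m)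
    (ν : Measure (E d × ℝ)) [IsFiniteMeasure ν] :
    Integrable (fun y => f (x, y)) ν :=
  integrable_of_vanish (hf.comp (Continuous.prodMk_right x)) hK₁ (fun y hy => h0 x y hy) ν

lemma continuous_integral_param {d m : ℕ} {f : E m × (E d × ℝ) → ℝ} (hf : Continuous f)
    {K₁ : Set (E d × ℝ)} (hK₁ : IsCompact K₁)
    (h0 : ∀ x y, y ∉ K₁ → f (x, y) = 0) :
    Continuous fun p : ProbabilityMeasure (E d × ℝ) × E m =>
      ∫ y, f (p.2, y) ∂p.1.toMeasure := by
  rw [continuous_iff_continuousAt]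
  rintro ⟨ν₀, x₀⟩
  have hint : ∀ (x : E m) (ν : ProbabilityMeasure (E d × ℝ)),
      Integrable (fun y => f (x, y)) ν.toMeasure := fun x ν =>
    integrable_param hf hK₁ h0 x _
  obtain ⟨M, hM⟩ :=
    hK₁.exists_bound_of_continuousOn ((hf.comp (Continuous.prodMk_right x₀)).continuousOn)
  have hM' : ∀ y, ‖f (x₀, y)‖ ≤ max M 0 := fun y => by
    by_cases hy : y ∈ K₁
    · exact le_max_of_le_left (hM y hy)
    · simp [h0 x₀ y hy]
  set fb : BoundedContinuousFunction (E d × ℝ) ℝ :=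
    BoundedContinuousFunction.ofNormedAddCommGroup (fun y => f (x₀, y))
      (hf.comp (Continuous.prodMk_right x₀)) (max M 0) hM' with hfb
  haveI : CompactSpace K₁ := isCompact_iff_compactSpace.mp hK₁
  set Fc : C(E m × K₁, ℝ) := ⟨fun q => f (q.1, q.2.1), by fun_prop⟩ with hFc
  set G : E m → ℝ := fun x => ‖Fc.curry x - Fc.curry x₀‖ with hG
  have hGcont : Continuous G := ((Fc.curry.continuous).sub continuous_const).norm
  have hG0 : G x₀ = 0 := by simp [hG]
  have hbound : ∀ x y, ‖f (x, y) - f (x₀, y)‖ ≤ G x := by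
    intro x y
    by_cases hy : y ∈ K₁
    · have h1 : f (x, y) - f (x₀, y) = (Fc.curry x - Fc.curry x₀) ⟨y, hy⟩ := by
        simp [hFc]
      rw [h1]
      exact ContinuousMap.norm_coe_le_norm _ _
    · simp only [h0 x y hy, h0 x₀ y hy, sub_zero, norm_zero]
      exact norm_nonneg _
  have key : ∀ p : ProbabilityMeasure (E d × ℝ) × E m,
      ∫ y, f (p.2, y) ∂p.1.toMeasure
        = (∫ y, (f (p.2, y) - f (x₀, y)) ∂p.1.toMeasure)
            + ∫ y, f (x₀, y) ∂p.1.toMeasure := by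
    intro p; rw [integral_sub (hint p.2 p.1) (hint x₀ p.1), sub_add_cancel]
  have h1 : Tendsto (fun p : ProbabilityMeasure (E d × ℝ) × E m =>
      ∫ y, (f (p.2, y) - f (x₀, y)) ∂p.1.toMeasure) (𝓝 (ν₀, x₀)) (𝓝 0) := by
    refine squeeze_zero_norm (a := fun p : ProbabilityMeasure (E d × ℝ) × E m => G p.2) (fun p => ?_) ?_
    · calc ‖∫ y, (f (p.2, y) - f (x₀, y)) ∂p.1.toMeasure‖
          ≤ G p.2 * (p.1.toMeasure univ).toReal :=
            norm_integral_le_of_norm_le_const (ae_of_all _ fun y => hbound p.2 y)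
        _ = G p.2 := by simp
    · have h := (hGcont.tendsto x₀).comp (continuous_snd.tendsto (ν₀, x₀))
      rwa [hG0] at h
  have h2 : Tendsto (fun p : ProbabilityMeasure (E d × ℝ) × E m =>
      ∫ y, f (x₀, y) ∂p.1.toMeasure) (𝓝 (ν₀, x₀)) (𝓝 (∫ y, f (x₀, y) ∂ν₀.toMeasure)) := by
    have hfst : Tendsto Prod.fst (𝓝 (ν₀, x₀)) (𝓝 ν₀) := continuous_fst.tendsto _
    have h := (ProbabilityMeasure.tendsto_iff_forall_integral_tendsto.mp hfst) fb
    simpa [hfb] using h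
  have h3 := h1.add h2
  rw [zero_add] at h3
  exact Tendsto.congr (fun p => (key p).symm) h3

end

end Aux2
section Aux3

open MeasureTheory Set Filter Metric
open scoped ENNReal RealInnerProductSpace BigOperators Topology

noncomputable section

variable {d : ℕ} {Ω : Set (E d)} {C σ : ℝ}

lemma S_meas {d : ℕ} (t : ℝ) : MeasurableSet ((univ : Set (E d)) ×ˢ Icc 0 t) :=
  MeasurableSet.univ.prod measurableSet_Icc

lemma mem_S_iff {d : ℕ} {t : ℝ} {z : E d × ℝ} :
    z ∈ (univ : Set (E d)) ×ˢ Icc 0 t ↔ z.2 ∈ Icc 0 t := by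
  simp [Set.mem_prod]

lemma masked_core {μ : Measure (E d × ℝ)} (hμ : IsLipCtx Ω C σ μ) (hσ : 0 < σ)
    {t : ℝ} (ht : t ∈ Icc (0:ℝ) 1) :
    μ ((univ : Set (E d)) ×ˢ Icc 0 t) ≠ 0 := by
  obtain ⟨hprob, hsupp, hmass, _⟩ := hμ
  have h1 : (Prod.snd ⁻¹' {(0:ℝ)} : Set (E d × ℝ)) ⊆ univ ×ˢ Icc 0 t := by
    rintro ⟨a, b⟩ hb
    simp only [mem_preimage, mem_singleton_iff] at hb
    exact mem_S_iff.mpr (by simp [hb, ht.1])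
  have h2 : timeMarg μ {0} ≤ μ (univ ×ˢ Icc 0 t) := by
    rw [timeMarg, Measure.map_apply measurable_snd (measurableSet_singleton 0)]
    exact measure_mono h1
  intro h
  rw [h, le_zero_iff] at h2
  have := hmass.trans_eq h2
  rw [le_zero_iff, ENNReal.ofReal_eq_zero] at this
  linarith

lemma maskedM_apply {μ : Measure (E d × ℝ)} {t : ℝ} (A : Set (E d × ℝ)) :
    maskedM μ t A = (μ (univ ×ˢ Icc 0 t))⁻¹ * μ (A ∩ univ ×ˢ Icc 0 t) := by
  rw [maskedM, Measure.smul_apply, Measure.restrict_apply' (S_meas t), smul_eq_mul]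

lemma maskedM_null {μ : Measure (E d × ℝ)} {t : ℝ} {A : Set (E d × ℝ)}
    (hA : μ (A ∩ univ ×ˢ Icc 0 t) = 0) : maskedM μ t A = 0 := by
  rw [maskedM_apply, hA, mul_zero]

lemma maskedM_isProb {μ : Measure (E d × ℝ)} {t : ℝ}
    (h : μ ((univ : Set (E d)) ×ˢ Icc 0 t) ≠ 0) [IsFiniteMeasure μ] :
    IsProbabilityMeasure (maskedM μ t) := by
  constructor
  rw [maskedM_apply, univ_inter]
  exact ENNReal.inv_mul_cancel h (measure_ne_top _ _)

lemma maskedP_toMeasure {μ : ProbabilityMeasure (E d × ℝ)} {t : ℝ}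
    (h : μ.toMeasure ((univ : Set (E d)) ×ˢ Icc 0 t) ≠ 0) :
    (maskedP μ t).toMeasure = maskedM μ.toMeasure t := by
  simp only [maskedP, h, ↓reduceDIte]
  rfl

lemma timeEnd_null {μ : Measure (E d × ℝ)} [IsFiniteMeasure μ] {t : ℝ} :
    maskedM μ t (Prod.snd ⁻¹' Ioi (timeEnd (maskedM μ t))) = 0 := by
  set ν := maskedM μ t with hν
  set A := {r : ℝ | ∀ ε > 0, timeMarg ν (Ioo (r - ε) (r + ε)) ≠ 0} with hA
  have hmapIoi : ∀ s : ℝ, timeMarg ν (Ioi s) = ν (Prod.snd ⁻¹' Ioi s) := fun s => by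
    rw [timeMarg, Measure.map_apply measurable_snd measurableSet_Ioi]
  have hIoit : ν (Prod.snd ⁻¹' Ioi t) = 0 := by
    apply maskedM_null
    convert measure_empty (μ := μ)
    ext z
    simp only [mem_inter_iff, mem_preimage, mem_Ioi, mem_empty_iff_false, iff_false, not_and]
    intro hz hz2
    exact absurd (mem_S_iff.mp hz2).2 (not_le.mpr hz)
  have hbdd : BddAbove A := by
    refine ⟨t, fun r hr => ?_⟩
    by_contra hrt
    push_neg at hrt
    refine hr (r - t) (by linarith) ?_
    have : Ioo (r - (r - t)) (r + (r - t)) ⊆ Ioi t := by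
      intro s hs
      simp only [mem_Ioo] at hs
      simp only [mem_Ioi]
      linarith [hs.1]
    refine measure_mono_null this ?_
    rw [hmapIoi]; exact hIoit
  have hEnd : timeEnd ν = sSup A := rfl
  have cover : Ioi (timeEnd ν) ⊆
      ⋃ pq ∈ {pq : ℚ × ℚ | timeMarg ν (Ioo (pq.1 : ℝ) (pq.2 : ℝ)) = 0},
        Ioo (pq.1 : ℝ) (pq.2 : ℝ) := by
    intro r hr
    rw [mem_Ioi, hEnd] at hr
    have hrA : r ∉ A := fun hrA => absurd (le_csSup hbdd hrA) (not_le.mpr hr)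
    rw [hA, mem_setOf_eq] at hrA
    push_neg at hrA
    obtain ⟨ε, hε, h0⟩ := hrA
    obtain ⟨p, hp1, hp2⟩ := exists_rat_btwn (show r - ε < r by linarith)
    obtain ⟨q, hq1, hq2⟩ := exists_rat_btwn (show r < r + ε by linarith)
    refine mem_biUnion (show (p, q) ∈ _ from ?_) ?_
    · exact measure_mono_null (Ioo_subset_Ioo hp1.le hq2.le) h0
    · exact mem_Ioo.mpr ⟨hp2, hq1⟩
  have hU : timeMarg ν (⋃ pq ∈ {pq : ℚ × ℚ | timeMarg ν (Ioo (pq.1 : ℝ) (pq.2 : ℝ)) = 0},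
      Ioo (pq.1 : ℝ) (pq.2 : ℝ)) = 0 := by
    refine (measure_biUnion_null_iff (Set.to_countable _)).mpr ?_
    intro pq hpq
    exact hpq
  rw [← hmapIoi]
  exact measure_mono_null cover hU

lemma maskedM_ae_facts {μ : Measure (E d × ℝ)} [IsFiniteMeasure μ] {t : ℝ} :
    (∀ᵐ y ∂(maskedM μ t), y.2 ∈ Icc 0 t) ∧
      (∀ᵐ y ∂(maskedM μ t), y.2 ∈ Icc 0 (timeEnd (maskedM μ t))) := by
  have h1 : ∀ᵐ y ∂(maskedM μ t), y.2 ∈ Icc 0 t := by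
    rw [ae_iff]
    apply maskedM_null
    convert measure_empty (μ := μ)
    ext z
    simp only [mem_inter_iff, mem_setOf_eq, mem_empty_iff_false, iff_false, not_and]
    intro hz hz2
    exact hz (mem_S_iff.mp hz2)
  refine ⟨h1, ?_⟩
  have h2 : ∀ᵐ y ∂(maskedM μ t), y.2 ≤ timeEnd (maskedM μ t) := by
    rw [ae_iff]
    convert timeEnd_null (μ := μ) (t := t) using 2
    ext z; simp [not_le]
  filter_upwards [h1, h2] with y hy1 hy2
  exact ⟨hy1.1, hy2⟩

end

end Aux3
section Aux4

open MeasureTheory Set Filter Metric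
open scoped ENNReal RealInnerProductSpace BigOperators Topology

noncomputable section

lemma masked_eq_main {d dh k H : ℕ} (θ : AttentionParams d dh k H)
    {Ω : Set (E d)} {C σ : ℝ} {μ : Measure (E d × ℝ)} (hμ : IsLipCtx Ω C σ μ) (hσ : 0 < σ)
    {t : ℝ} (ht : t ∈ Icc (0:ℝ) 1) (x : E d) :
    maskedAttention θ μ (x, t)
        = maskedAttention θ (maskedM μ t) (x, timeEnd (maskedM μ t)) ∧
      maskedAttention θ (maskedM μ t) (x, timeEnd (maskedM μ t))
        = attentionST θ (maskedM μ t) x := by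
  haveI : IsProbabilityMeasure μ := hμ.1
  set S : Set (E d × ℝ) := univ ×ˢ Icc 0 t with hS
  set ν : Measure (E d × ℝ) := maskedM μ t with hν
  set e : ℝ := timeEnd ν with he
  have hc0 : μ S ≠ 0 := masked_core hμ hσ ht
  have hctop : μ S ≠ ⊤ := measure_ne_top _ _
  set r : ℝ := (μ S)⁻¹.toReal with hr
  have hr0 : r ≠ 0 :=
    ENNReal.toReal_ne_zero.mpr ⟨ENNReal.inv_ne_zero.mpr hctop, ENNReal.inv_ne_top.mpr hc0⟩
  have hν_eq : ν = (μ S)⁻¹ • μ.restrict S := rfl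
  have fact_t : ∀ᵐ z ∂μ.restrict S, z.2 ∈ Icc 0 t := by
    filter_upwards [ae_restrict_mem (S_meas t)] with z hz
    exact mem_S_iff.mp hz
  have null_e : μ.restrict S (Prod.snd ⁻¹' Ioi e) = 0 := by
    have h := timeEnd_null (μ := μ) (t := t)
    rw [maskedM_apply, mul_eq_zero] at h
    rcases h with h | h
    · exact absurd (ENNReal.inv_eq_zero.mp h) hctop
    · rw [Measure.restrict_apply' (S_meas t)]
      exact h
  have fact_e : ∀ᵐ z ∂μ.restrict S, z.2 ∈ Icc 0 e := by
    have h2 : ∀ᵐ z ∂μ.restrict S, z.2 ∉ Ioi e := by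
      rw [ae_iff]
      convert null_e using 2
      ext z; simp
    filter_upwards [fact_t, h2] with z hz1 hz2
    exact ⟨hz1.1, not_lt.mp (fun hh => hz2 hh)⟩
  -- generic per-head computation
  have main : ∀ (nm : E d × ℝ → ℝ) (Vv : E d × ℝ → E dh),
      (∫ y, ((nm y * (Icc (0:ℝ) t).indicator 1 y.2)
            / ∫ z, nm z * (Icc (0:ℝ) t).indicator 1 z.2 ∂μ) • Vv y ∂μ
        = ∫ y, ((nm y * (Icc (0:ℝ) e).indicator 1 y.2)
            / ∫ z, nm z * (Icc (0:ℝ) e).indicator 1 z.2 ∂ν) • Vv y ∂ν)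
      ∧ (∫ y, ((nm y * (Icc (0:ℝ) e).indicator 1 y.2)
            / ∫ z, nm z * (Icc (0:ℝ) e).indicator 1 z.2 ∂ν) • Vv y ∂ν
        = ∫ y, (nm y / ∫ z, nm z ∂ν) • Vv y ∂ν) := by
    intro nm Vv
    set b : ℝ := ∫ z, nm z ∂(μ.restrict S) with hb
    set I : E dh := ∫ y, nm y • Vv y ∂(μ.restrict S) with hI
    have stepA : ∫ z, nm z * (Icc (0:ℝ) t).indicator 1 z.2 ∂μ = b := by
      have h1 : (fun z : E d × ℝ => nm z * (Icc (0:ℝ) t).indicator 1 z.2)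
          = S.indicator (fun z => nm z * (Icc (0:ℝ) t).indicator 1 z.2) := by
        funext z
        by_cases hz : z ∈ S
        · rw [indicator_of_mem hz]
        · rw [indicator_of_notMem hz,
            indicator_of_notMem (fun hh => hz (mem_S_iff.mpr hh)), mul_zero]
      rw [h1, integral_indicator (S_meas t)]
      refine integral_congr_ae ?_
      filter_upwards [fact_t] with z hz
      rw [indicator_of_mem hz, Pi.one_apply, mul_one]
    have restr_e : ∫ z, nm z * (Icc (0:ℝ) e).indicator 1 z.2 ∂(μ.restrict S) = b := by
      refine integral_congr_ae ?_
      filter_upwards [fact_e] with z hz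
      rw [indicator_of_mem hz, Pi.one_apply, mul_one]
    have stepB : ∫ z, nm z * (Icc (0:ℝ) e).indicator 1 z.2 ∂ν = r * b := by
      rw [hν_eq, integral_smul_measure, restr_e, smul_eq_mul]
    have stepC : ∫ z, nm z ∂ν = r * b := by
      rw [hν_eq, integral_smul_measure, smul_eq_mul, ← hb]
    have innerA : ∫ y, ((nm y * (Icc (0:ℝ) t).indicator 1 y.2) / b) • Vv y ∂μ
        = b⁻¹ • I := by
      have h1 : (fun y : E d × ℝ => ((nm y * (Icc (0:ℝ) t).indicator 1 y.2) / b) • Vv y)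
          = S.indicator (fun y => ((nm y * (Icc (0:ℝ) t).indicator 1 y.2) / b) • Vv y) := by
        funext y
        by_cases hy : y ∈ S
        · rw [indicator_of_mem hy]
        · rw [indicator_of_notMem hy,
            indicator_of_notMem (fun hh => hy (mem_S_iff.mpr hh)), mul_zero, zero_div,
            zero_smul]
      rw [h1, integral_indicator (S_meas t)]
      have h2 : ∫ y, ((nm y * (Icc (0:ℝ) t).indicator 1 y.2) / b) • Vv y ∂(μ.restrict S)
          = ∫ y, b⁻¹ • (nm y • Vv y) ∂(μ.restrict S) := by
        refine integral_congr_ae ?_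
        filter_upwards [fact_t] with y hy
        rw [indicator_of_mem hy, Pi.one_apply, mul_one, smul_smul, div_eq_inv_mul]
      rw [h2, integral_smul]
    have innerB : ∫ y, ((nm y * (Icc (0:ℝ) e).indicator 1 y.2) / (r * b)) • Vv y ∂ν
        = b⁻¹ • I := by
      rw [hν_eq, integral_smul_measure]
      have h2 : ∫ y, ((nm y * (Icc (0:ℝ) e).indicator 1 y.2) / (r * b)) • Vv y ∂(μ.restrict S)
          = ∫ y, (r * b)⁻¹ • (nm y • Vv y) ∂(μ.restrict S) := by
        refine integral_congr_ae ?_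
        filter_upwards [fact_e] with y hy
        rw [indicator_of_mem hy, Pi.one_apply, mul_one, smul_smul, div_eq_inv_mul]
      rw [h2, integral_smul, ← hI, smul_smul, mul_inv, ← mul_assoc,
        mul_inv_cancel₀ hr0, one_mul]
    have innerC : ∫ y, (nm y / (r * b)) • Vv y ∂ν = b⁻¹ • I := by
      rw [hν_eq, integral_smul_measure]
      have h2 : ∫ y, (nm y / (r * b)) • Vv y ∂(μ.restrict S)
          = ∫ y, (r * b)⁻¹ • (nm y • Vv y) ∂(μ.restrict S) := by
        refine integral_congr_ae (ae_of_all _ fun y => ?_)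
        simp only [smul_smul, div_eq_inv_mul]
      rw [h2, integral_smul, ← hI, smul_smul, mul_inv, ← mul_assoc,
        mul_inv_cancel₀ hr0, one_mul]
    constructor
    · rw [stepA, stepB, innerA, innerB]
    · rw [stepB, stepC, innerB, innerC]
  constructor
  · simp only [maskedAttention]
    congr 1
    refine Finset.sum_congr rfl fun h _ => congrArg _ ?_
    exact (main (fun y => Real.exp (⟪θ.Q h x, θ.K h y.1⟫ / Real.sqrt k))
      (fun y => θ.V h y.1)).1
  · simp only [maskedAttention, attentionST]
    congr 1
    refine Finset.sum_congr rfl fun h _ => congrArg _ ?_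
    exact (main (fun y => Real.exp (⟪θ.Q h x, θ.K h y.1⟫ / Real.sqrt k))
      (fun y => θ.V h y.1)).2

end

end Aux4
section Aux5

open MeasureTheory Set Filter Metric
open scoped ENNReal RealInnerProductSpace BigOperators Topology

noncomputable section

lemma attentionST_canon {d dh k H : ℕ} (θ : AttentionParams d dh k H)
    {ν : Measure (E d × ℝ)} [IsFiniteMeasure ν]
    {χ : E d × ℝ → ℝ} (hχc : Continuous χ)
    {K₁ : Set (E d × ℝ)} (hK₁ : IsCompact K₁) (hχ0 : ∀ y ∉ K₁, χ y = 0)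
    (hχae : ∀ᵐ y ∂ν, χ y = 1) (x : E d) :
    attentionST θ ν x = x + ∑ h : Fin H, θ.W h
      ((∫ y, Real.exp (⟪θ.Q h x, θ.K h y.1⟫ / Real.sqrt k) * χ y ∂ν)⁻¹ •
        toE (fun i => ∫ y,
          Real.exp (⟪θ.Q h x, θ.K h y.1⟫ / Real.sqrt k) * χ y * θ.V h y.1 i ∂ν)) := by
  simp only [attentionST]
  congr 1
  refine Finset.sum_congr rfl fun h _ => congrArg _ ?_
  set nm : E d × ℝ → ℝ := fun y => Real.exp (⟪θ.Q h x, θ.K h y.1⟫ / Real.sqrt k) with hnm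
  have hnmc : Continuous nm := by
    apply Real.continuous_exp.comp
    exact (continuous_const.inner ((θ.K h).continuous.comp continuous_fst)).div_const _
  set D : ℝ := ∫ z, nm z ∂ν with hD
  have hden : ∫ y, nm y * χ y ∂ν = D := by
    refine integral_congr_ae ?_
    filter_upwards [hχae] with y hy
    rw [hy, mul_one]
  have hF : Integrable (fun y => (nm y * χ y) • θ.V h y.1) ν := by
    refine integrable_of_vanish ?_ hK₁ (fun y hy => ?_) ν
    · exact ((hnmc.mul hχc).smul ((θ.V h).continuous.comp continuous_fst))
    · rw [hχ0 y hy, mul_zero, zero_smul]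
  have step1 : ∫ y, (nm y / D) • θ.V h y.1 ∂ν
      = ∫ y, (nm y * χ y / D) • θ.V h y.1 ∂ν := by
    refine integral_congr_ae ?_
    filter_upwards [hχae] with y hy
    rw [hy, mul_one]
  have step2 : ∫ y, (nm y * χ y / D) • θ.V h y.1 ∂ν
      = D⁻¹ • ∫ y, (nm y * χ y) • θ.V h y.1 ∂ν := by
    rw [← integral_smul]
    refine integral_congr_ae (ae_of_all _ fun y => ?_)
    simp only [smul_smul, div_eq_inv_mul]
  have step3 : ∫ y, (nm y * χ y) • θ.V h y.1 ∂ν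
      = toE (fun i => ∫ y, nm y * χ y * θ.V h y.1 i ∂ν) := by
    rw [integral_eq_toE ν _ hF]
    congr 1
  rw [step1, step2, step3, hden]

lemma denom_pos {d kk : ℕ} (Qh : E d →L[ℝ] E kk) (Kh : E d →L[ℝ] E kk)
    {Ω : Set (E d)} (hΩ : IsCompact Ω) {χ : E d × ℝ → ℝ} (hχc : Continuous χ)
    {K₁ : Set (E d × ℝ)} (hK₁ : IsCompact K₁) (hχ0 : ∀ y ∉ K₁, χ y = 0)
    (hχnn : ∀ y, 0 ≤ χ y) (hχ1 : ∀ y ∈ Ω ×ˢ Icc (0:ℝ) 1, χ y = 1)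
    {ν : Measure (E d × ℝ)} [IsProbabilityMeasure ν]
    (hνK : ν ((Ω ×ˢ Icc (0:ℝ) 1)ᶜ) = 0) {x : E d} (hx : x ∈ Ω) :
    0 < ∫ y, Real.exp (⟪Qh x, Kh y.1⟫ / Real.sqrt kk) * χ y ∂ν := by
  obtain ⟨R, hR⟩ := hΩ.exists_bound_of_continuousOn continuous_id.continuousOn
  set B : ℝ := ‖Qh‖ * R * (‖Kh‖ * R) with hB
  set M : ℝ := B * (Real.sqrt kk)⁻¹ with hM
  set K : Set (E d × ℝ) := Ω ×ˢ Icc (0:ℝ) 1 with hK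
  have hKcomp : IsCompact K := hΩ.prod isCompact_Icc
  have hRnn : 0 ≤ R := (norm_nonneg _).trans (hR _ hx)
  have hMbd : ∀ y ∈ K, -M ≤ ⟪Qh x, Kh y.1⟫ / Real.sqrt kk := by
    intro y hy
    have h1 : |⟪Qh x, Kh y.1⟫| ≤ B := by
      calc |⟪Qh x, Kh y.1⟫| ≤ ‖Qh x‖ * ‖Kh y.1‖ := abs_real_inner_le_norm _ _
        _ ≤ ‖Qh‖ * R * (‖Kh‖ * R) := by
            apply mul_le_mul _ _ (norm_nonneg _) (by positivity)
            · exact (Qh.le_opNorm x).trans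
                (mul_le_mul_of_nonneg_left (hR x hx) (norm_nonneg _))
            · exact (Kh.le_opNorm y.1).trans
                (mul_le_mul_of_nonneg_left (hR y.1 hy.1) (norm_nonneg _))
    have h2 : |⟪Qh x, Kh y.1⟫ / Real.sqrt kk| ≤ M := by
      rw [abs_div, abs_of_nonneg (Real.sqrt_nonneg _), div_eq_mul_inv]
      exact mul_le_mul_of_nonneg_right h1 (inv_nonneg.mpr (Real.sqrt_nonneg _))
    linarith [(abs_le.mp h2).1]
  set c₀ : ℝ := Real.exp (-M) with hc₀
  set f : E d × ℝ → ℝ := fun y => Real.exp (⟪Qh x, Kh y.1⟫ / Real.sqrt kk) * χ y with hf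
  have hfc : Continuous f := by
    refine Continuous.mul ?_ hχc
    exact Real.continuous_exp.comp
      ((continuous_const.inner (Kh.continuous.comp continuous_fst)).div_const _)
  have hint_f : Integrable f ν := by
    refine integrable_of_vanish hfc hK₁ (fun y hy => ?_) ν
    rw [hf]; simp only; rw [hχ0 y hy, mul_zero]
  have hint_g : Integrable (K.indicator fun _ => c₀) ν :=
    (integrable_const c₀).indicator hKcomp.measurableSet
  have hle : ∀ y, K.indicator (fun _ => c₀) y ≤ f y := by
    intro y
    by_cases hy : y ∈ K
    · rw [indicator_of_mem hy, hf]
      simp only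
      rw [hχ1 y hy, mul_one]
      exact Real.exp_le_exp.mpr (hMbd y hy)
    · rw [indicator_of_notMem hy]
      exact mul_nonneg (Real.exp_pos _).le (hχnn y)
  have hνK1 : ν K = 1 := by
    have h := measure_add_measure_compl (μ := ν) hKcomp.measurableSet
    rw [hνK, add_zero, measure_univ] at h
    exact h
  calc (0:ℝ) < c₀ * (ν K).toReal := by rw [hνK1]; simpa using Real.exp_pos (-M)
    _ = ∫ y, K.indicator (fun _ => c₀) y ∂ν := by
        rw [integral_indicator_const _ hKcomp.measurableSet, smul_eq_mul, mul_comm, measureReal_def]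
    _ ≤ ∫ y, f y ∂ν := integral_mono hint_g hint_f hle

end

end Aux5

/-- **Reduced masked attention (Lemma 12 (b), (c)).** For a masked multi-head
self-attention `Γ_θ`: (b) `Γ_θ(μ, x, t) = Γ̄_θ(μ_t, x)` on `Lip_C^σ(Ω̃) × Ω̃` where
`Γ̄_θ(ν, x) = Γ_θ(ν, x, e(ν̄))`; (c) the reduced map `(ν, x) ↦ Γ̄_θ(ν, x)` is continuous
on `X_C^σ` for the product of the weak* and Euclidean topologies; moreover `Γ̄_θ(μ_t, x)`
equals the unmasked attention formula evaluated at `μ_t`. -/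
theorem masked_attention_reduced {d dh k H : ℕ} (Ω : Set (E d)) (hΩ : IsCompact Ω)
    {C σ : ℝ} (hC : 0 < C) (hσ : σ ∈ Ioo (0:ℝ) 1)
    (θ : AttentionParams d dh k H) :
    (∀ μ : ProbabilityMeasure (E d × ℝ), IsLipCtx Ω C σ μ.toMeasure →
        ∀ x ∈ Ω, ∀ t ∈ Icc (0:ℝ) 1,
          maskedAttention θ μ.toMeasure (x, t)
            = maskedAttention θ (maskedP μ t).toMeasure
                (x, timeEnd (maskedP μ t).toMeasure)) ∧
      ContinuousOn (fun p : ProbabilityMeasure (E d × ℝ) × E d =>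
          maskedAttention θ p.1.toMeasure (p.2, timeEnd p.1.toMeasure))
        (XCset Ω C σ) ∧
      (∀ μ : ProbabilityMeasure (E d × ℝ), IsLipCtx Ω C σ μ.toMeasure →
        ∀ x ∈ Ω, ∀ t ∈ Icc (0:ℝ) 1,
          maskedAttention θ (maskedP μ t).toMeasure
              (x, timeEnd (maskedP μ t).toMeasure)
            = attentionST θ (maskedP μ t).toMeasure x) := by
  refine ⟨?_, ?_, ?_⟩
  · -- part (b)
    intro μ hLip x _ t ht
    have hc0 := masked_core hLip hσ.1 ht
    rw [maskedP_toMeasure hc0]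
    exact (masked_eq_main θ hLip hσ.1 ht x).1
  · -- part (c) : continuity
    rcases Set.eq_empty_or_nonempty Ω with hemp | ⟨x₀, hx₀⟩
    · have hX : XCset Ω C σ = ∅ := by
        rw [Set.eq_empty_iff_forall_notMem]
        rintro p ⟨μ, hLip, t, ht, x, hx, _⟩
        rw [hemp] at hx
        exact hx
      rw [hX]
      exact continuousOn_empty _
    · set K : Set (E d × ℝ) := Ω ×ˢ Icc (0:ℝ) 1 with hK
      have hKcomp : IsCompact K := hΩ.prod isCompact_Icc
      have hKne : K.Nonempty := ⟨(x₀, 0), by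
        refine Set.mem_prod.mpr ⟨hx₀, ?_⟩
        exact ⟨le_refl 0, zero_le_one⟩⟩
      set χ : E d × ℝ → ℝ := fun y => max (1 - Metric.infDist y K) 0 with hχ
      have hχc : Continuous χ :=
        (continuous_const.sub (Metric.continuous_infDist_pt K)).max continuous_const
      have hχnn : ∀ y, 0 ≤ χ y := fun y => le_max_right _ _
      have hχ1 : ∀ y ∈ K, χ y = 1 := fun y hy => by
        rw [hχ]; simp only [Metric.infDist_zero_of_mem hy, sub_zero]
        exact max_eq_left zero_le_one
      set K₁ : Set (E d × ℝ) := Metric.cthickening 1 K with hK₁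
      have hK₁comp : IsCompact K₁ := hKcomp.cthickening
      have hχ0 : ∀ y ∉ K₁, χ y = 0 := by
        intro y hy
        have h1 : ¬ EMetric.infEdist y K ≤ ENNReal.ofReal 1 := fun hh =>
          hy (Metric.mem_cthickening_iff.mpr hh)
        have h2 : (1:ℝ) < Metric.infDist y K := by
          rw [not_le] at h1
          have := ENNReal.toReal_lt_toReal ENNReal.ofReal_ne_top
            (Metric.infEdist_ne_top hKne) |>.mpr h1
          rwa [ENNReal.toReal_ofReal zero_le_one] at this
        rw [hχ]; simp only
        exact max_eq_right (by linarith)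
      -- the canonical continuous function
      set g : ProbabilityMeasure (E d × ℝ) × E d → E d := fun p =>
        p.2 + ∑ h : Fin H, θ.W h
          ((∫ y, Real.exp (⟪θ.Q h p.2, θ.K h y.1⟫ / Real.sqrt k) * χ y ∂p.1.toMeasure)⁻¹ •
            toE (fun i => ∫ y,
              Real.exp (⟪θ.Q h p.2, θ.K h y.1⟫ / Real.sqrt k) * χ y * θ.V h y.1 i
                ∂p.1.toMeasure)) with hg
      have hfc : ∀ h : Fin H, Continuous fun q : E d × (E d × ℝ) =>
          Real.exp (⟪θ.Q h q.1, θ.K h q.2.1⟫ / Real.sqrt k) * χ q.2 := fun h =>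
        ((Real.continuous_exp.comp
          ((((θ.Q h).continuous.comp continuous_fst).inner
            ((θ.K h).continuous.comp (continuous_fst.comp continuous_snd))).div_const _)).mul
          (hχc.comp continuous_snd))
      have hD : ∀ h : Fin H, Continuous fun p : ProbabilityMeasure (E d × ℝ) × E d =>
          ∫ y, Real.exp (⟪θ.Q h p.2, θ.K h y.1⟫ / Real.sqrt k) * χ y ∂p.1.toMeasure :=
        fun h => continuous_integral_param (hfc h) hK₁comp
          (fun x y hy => by simp only; rw [hχ0 y hy, mul_zero])
      have hN : ∀ (h : Fin H) (i : Fin dh),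
          Continuous fun p : ProbabilityMeasure (E d × ℝ) × E d =>
            ∫ y, Real.exp (⟪θ.Q h p.2, θ.K h y.1⟫ / Real.sqrt k) * χ y * θ.V h y.1 i
              ∂p.1.toMeasure := by
        intro h i
        refine continuous_integral_param (f := fun q : E d × (E d × ℝ) =>
          Real.exp (⟪θ.Q h q.1, θ.K h q.2.1⟫ / Real.sqrt k) * χ q.2 * θ.V h q.2.1 i)
          ?_ hK₁comp (fun x y hy => by simp only; rw [hχ0 y hy, mul_zero, zero_mul])
        exact (hfc h).mul (((EuclideanSpace.proj i).continuous.comp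
          ((θ.V h).continuous.comp (continuous_fst.comp continuous_snd))))
      have hpos : ∀ p ∈ XCset Ω C σ, ∀ h : Fin H,
          (0:ℝ) < ∫ y, Real.exp (⟪θ.Q h p.2, θ.K h y.1⟫ / Real.sqrt k) * χ y
            ∂p.1.toMeasure := by
        rintro p ⟨μ, hLip, t, ht, x, hx, rfl⟩ h
        have hc0 := masked_core hLip hσ.1 ht
        rw [maskedP_toMeasure hc0]
        haveI := maskedM_isProb (μ := μ.toMeasure) hc0
        have hνK : maskedM μ.toMeasure t Kᶜ = 0 :=
          maskedM_null (measure_mono_null Set.inter_subset_left hLip.2.1)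
        exact denom_pos (θ.Q h) (θ.K h) hΩ hχc hK₁comp hχ0 hχnn hχ1 hνK hx
      have hgcont : ContinuousOn g (XCset Ω C σ) := by
        rw [hg]
        refine ContinuousOn.add continuous_snd.continuousOn ?_
        refine continuousOn_finset_sum _ (fun h _ => ?_)
        refine ((θ.W h).continuous.comp_continuousOn ?_)
        refine ContinuousOn.smul (ContinuousOn.inv₀ (hD h).continuousOn
          (fun p hp => (hpos p hp h).ne')) ?_
        refine Continuous.continuousOn ?_
        exact ((EuclideanSpace.equiv (Fin dh) ℝ).symm.continuous).comp
          (continuous_pi fun i => hN h i)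
      refine hgcont.congr ?_
      rintro p ⟨μ, hLip, t, ht, x, hx, rfl⟩
      simp only
      have hc0 := masked_core hLip hσ.1 ht
      rw [maskedP_toMeasure hc0]
      haveI := maskedM_isProb (μ := μ.toMeasure) hc0
      have hνK : maskedM μ.toMeasure t Kᶜ = 0 :=
        maskedM_null (measure_mono_null Set.inter_subset_left hLip.2.1)
      have hχae : ∀ᵐ y ∂(maskedM μ.toMeasure t), χ y = 1 := by
        have hmem : ∀ᵐ y ∂(maskedM μ.toMeasure t), y ∈ K := by
          rw [ae_iff]
          exact hνK
        filter_upwards [hmem] with y hy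
        exact hχ1 y hy
      rw [(masked_eq_main θ hLip hσ.1 ht x).2,
        attentionST_canon θ hχc hK₁comp hχ0 hχae x]
      rw [hg]
      simp only [maskedP_toMeasure hc0]
  · -- part (c') : unmasked formula
    intro μ hLip x _ t ht
    have hc0 := masked_core hLip hσ.1 ht
    rw [maskedP_toMeasure hc0]
    exact (masked_eq_main θ hLip hσ.1 ht x).2
end

section
/- Let Ω ⊂ ℝ^d be compact, Ω̃ = Ω × [0,1], C > 0, σ ∈ (0,1). Let (Λ_n)_{n∈ℕ} be continuous, causal and identifiable space-time in-context maps with values in ℝ^{d'}, and let Λ* be a continuous, causal space-time in-context map with values in ℝ^{d'}. If sup over (μ, x, t) ∈ Lip_C^σ(Ω̃) × Ω̃ of |Λ_n(μ, x, t) − Λ*(μ, x, t)| tends to 0 as n → ∞, then Λ* is identifiable; that is, identifiability is stable under uniform convergence. -/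
open MeasureTheory Set Filter
open scoped ENNReal RealInnerProductSpace BigOperators Topology

/-- **Stability of identifiability under uniform convergence (Lemma 14).** If continuous,
causal, identifiable space-time in-context maps `Λₙ` converge uniformly on
`Lip_C^σ(Ω̃) × Ω̃` to a continuous causal space-time in-context map `Λ*`, then `Λ*` is
identifiable. -/
theorem identifiability_stable {d d' : ℕ} (Ω : Set (E d)) (hΩ : IsCompact Ω)
    {C σ : ℝ} (hC : 0 < C) (hσ : σ ∈ Ioo (0:ℝ) 1)
    (Λn : ℕ → PSTMap d d') (Λ : PSTMap d d')
    (hcontn : ∀ n, ContinuousOn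
      (fun p : ProbabilityMeasure (E d × ℝ) × (E d × ℝ) => Λn n p.1 p.2)
      ({μ : ProbabilityMeasure (E d × ℝ) | IsLipCtx Ω C σ μ.toMeasure} ×ˢ
        (Ω ×ˢ Icc (0:ℝ) 1)))
    (hcausaln : ∀ n, IsCausalP Ω C σ (Λn n))
    (hidentn : ∀ n, IsIdentifiableP Ω C σ (Λn n))
    (hcont : ContinuousOn (fun p : ProbabilityMeasure (E d × ℝ) × (E d × ℝ) => Λ p.1 p.2)
      ({μ : ProbabilityMeasure (E d × ℝ) | IsLipCtx Ω C σ μ.toMeasure} ×ˢ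
        (Ω ×ˢ Icc (0:ℝ) 1)))
    (hcausal : IsCausalP Ω C σ Λ)
    (hconv : ∀ ε > 0, ∃ N₀ : ℕ, ∀ n ≥ N₀,
      ∀ μ : ProbabilityMeasure (E d × ℝ), IsLipCtx Ω C σ μ.toMeasure →
        ∀ x ∈ Ω, ∀ t ∈ Icc (0:ℝ) 1, ‖Λn n μ (x, t) - Λ μ (x, t)‖ ≤ ε) :
    IsIdentifiableP Ω C σ Λ := by
  intro μ hμ t ht t' ht' hmask x hx
  rw [← hcausal μ hμ x hx t ht, ← hcausal μ hμ x hx t' ht']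
  have key : ∀ ε > 0, ‖Λ μ (x, t) - Λ μ (x, t')‖ ≤ 0 + ε := by
    intro ε hε
    obtain ⟨N, hN⟩ := hconv (ε / 2) (by positivity)
    have a1 := hN N le_rfl μ hμ x hx t ht
    have a2 := hN N le_rfl μ hμ x hx t' ht'
    have e : Λn N μ (x, t) = Λn N μ (x, t') := by
      rw [hcausaln N μ hμ x hx t ht, hcausaln N μ hμ x hx t' ht',
        hidentn N μ hμ t ht t' ht' hmask x hx]
    have : Λ μ (x, t) - Λ μ (x, t')
        = (Λ μ (x, t) - Λn N μ (x, t)) + (Λn N μ (x, t') - Λ μ (x, t')) := by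
      rw [e]; abel
    rw [this, zero_add]
    calc ‖(Λ μ (x, t) - Λn N μ (x, t)) + (Λn N μ (x, t') - Λ μ (x, t'))‖
        ≤ ‖Λ μ (x, t) - Λn N μ (x, t)‖ + ‖Λn N μ (x, t') - Λ μ (x, t')‖ :=
          norm_add_le _ _
      _ ≤ ε / 2 + ε / 2 := by
          refine add_le_add ?_ a2
          rw [norm_sub_rev]; exact a1
      _ = ε := by ring
  have h0 : ‖Λ μ (x, t) - Λ μ (x, t')‖ ≤ 0 := le_of_forall_pos_le_add key
  have := norm_le_zero_iff.mp h0
  exact sub_eq_zero.mp this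
end
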